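/- For ḡ > 0, the expression (3/2)·(1 - √(ḡ/(2+ḡ))·(1 + 1/(2+ḡ))) is strictly positive, strictly decreasing in ḡ, and tends to 0 as ḡ → ∞. -/

import Mathlib

open Filter

noncomputable def peBound (g : ℝ) : ℝ :=
  (3 / 2) * (1 - Real.sqrt (g / (2 + g)) * (1 + 1 / (2 + g)))

lemma hmono : StrictMonoOn (fun s : ℝ => 3*s - s^3) (Set.Icc 0 1) := by
  apply strictMonoOn_of_deriv_pos (convex_Icc 0 1) (by fun_prop)
  intro x hx
  rw [interior_Icc] at hx
  have h : HasDerivAt (fun s : ℝ => 3*s - s^3) (3*1 - 3*x^2) x := by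
    simpa [Pi.sub_def] using ((hasDerivAt_id x).const_mul 3).sub (hasDerivAt_pow 3 x)
  rw [h.deriv]
  nlinarith [hx.1, hx.2]

lemma peBound_eq (g : ℝ) (hg : 0 < g) :
    peBound g = (3/2) * (1 - (3 * Real.sqrt (g/(2+g)) - (Real.sqrt (g/(2+g)))^3)/2) := by
  have h2g : (0:ℝ) < 2 + g := by linarith
  have ht : 0 ≤ g/(2+g) := by positivity
  have hs2 : (Real.sqrt (g/(2+g)))^2 = g/(2+g) := Real.sq_sqrt ht
  unfold peBound
  have : (1 + 1/(2+g)) = (3 - g/(2+g))/2 := by field_simp; ring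
  rw [this]
  have : (Real.sqrt (g/(2+g)))^3 = Real.sqrt (g/(2+g)) * (g/(2+g)) := by
    rw [pow_succ, hs2]; ring
  rw [this]; ring

lemma s_mem (g : ℝ) (hg : 0 < g) : Real.sqrt (g/(2+g)) ∈ Set.Icc (0:ℝ) 1 := by
  refine ⟨Real.sqrt_nonneg _, Real.sqrt_le_one.mpr ?_⟩
  rw [div_le_one (by linarith)]; linarith

lemma s_lt_one (g : ℝ) (hg : 0 < g) : Real.sqrt (g/(2+g)) < 1 := by
  have : g/(2+g) < 1 := by rw [div_lt_one (by linarith)]; linarith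
  exact (Real.sqrt_lt' one_pos).mpr (by simpa using this)

theorem stmt8 :
    (∀ g : ℝ, 0 < g → 0 < peBound g) ∧
    StrictAntiOn peBound (Set.Ioi 0) ∧
    Tendsto peBound atTop (nhds 0) := by
  refine ⟨?_, ?_, ?_⟩
  · intro g hg
    rw [peBound_eq g hg]
    have h1 : (3 : ℝ) * Real.sqrt (g/(2+g)) - (Real.sqrt (g/(2+g)))^3 < 3*1 - 1^3 := by
      exact hmono (s_mem g hg) (by norm_num) (s_lt_one g hg)
    norm_num at h1 ⊢
    nlinarith
  · intro a ha b hb hab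
    simp only [Set.mem_Ioi] at ha hb
    rw [peBound_eq a ha, peBound_eq b hb]
    have hsab : Real.sqrt (a/(2+a)) < Real.sqrt (b/(2+b)) := by
      apply Real.sqrt_lt_sqrt (by positivity)
      rw [div_lt_div_iff₀ (by linarith) (by linarith)]; nlinarith
    have := hmono (s_mem a ha) (s_mem b hb) hsab
    simp only at this
    nlinarith
  · have h1 : Tendsto (fun g : ℝ => 2 + g) atTop atTop := tendsto_atTop_add_const_left _ 2 tendsto_id
    have h2 : Tendsto (fun g : ℝ => 1/(2+g)) atTop (nhds 0) :=
      Tendsto.div_atTop tendsto_const_nhds h1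
    have h2' : Tendsto (fun g : ℝ => 2/(2+g)) atTop (nhds 0) :=
      Tendsto.div_atTop tendsto_const_nhds h1
    have h3 : Tendsto (fun g : ℝ => g/(2+g)) atTop (nhds 1) := by
      have heq : ∀ᶠ g : ℝ in atTop, 1 - 2/(2+g) = g/(2+g) := by
        filter_upwards [eventually_gt_atTop 0] with g hg
        field_simp
        ring
      refine Tendsto.congr' heq ?_
      simpa using tendsto_const_nhds.sub h2'
    have h4 : Tendsto (fun g : ℝ => Real.sqrt (g/(2+g))) atTop (nhds 1) := by
      have := (Real.continuous_sqrt.tendsto 1).comp h3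
      simpa [Function.comp_def] using this
    have h5 : Tendsto peBound atTop (nhds ((3/2) * (1 - 1 * (1 + 0)))) := by
      unfold peBound
      exact (tendsto_const_nhds.sub (h4.mul (tendsto_const_nhds.add h2))).const_mul _
    simpa using h5
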